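/- With ∂f/∂μ(z,μ) = πi/4 + (1/2)·log(μ/2 − z) + log 2 + (μ/(8T))·[log(z+T) − log(z−T) − 2·artanh(2T/μ)], where T = T(μ) = sqrt(μ²/4 − 1), the apparent singularity at μ = 2 (i.e., T = 0) is removable, and lim_{μ→2} ∂f/∂μ(z,μ) = πi/4 + (1/2)·log(1 − z) + log 2 + 1/(2z) − 1/2 for every z with Im z > 0. -/

import Mathlib

open Complex Filter

/-- The apparent singularity of
∂f/∂μ(z,μ) = πi/4 + (1/2)log(μ/2 − z) + log 2 + (μ/(8T))[log(z+T) − log(z−T) − 2 artanh(2T/μ)]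
(with T = T(μ) = sqrt(μ²/4 − 1), Im T ≥ 0) at μ = 2 is removable:
as real μ → 2 (μ ≠ 2), it tends to πi/4 + (1/2)log(1−z) + log 2 + 1/(2z) − 1/2,
for every z with Im z > 0.  Here artanh(w) = (1/2)log((1+w)/(1−w)). -/
theorem stmt_5 (z : ℂ) (hz : 0 < z.im)
    (T : ℝ → ℂ) (hT : ∀ μ : ℝ, T μ = ((μ ^ 2 / 4 - 1 : ℝ) : ℂ) ^ (1 / 2 : ℂ))
    (artanh : ℂ → ℂ) (hartanh : ∀ w : ℂ, artanh w = (1 / 2) * Complex.log ((1 + w) / (1 - w)))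
    (F : ℝ → ℂ)
    (hF : ∀ μ : ℝ, F μ =
      (Real.pi : ℂ) * Complex.I / 4 + (1 / 2) * Complex.log ((μ / 2 : ℝ) - z)
        + Complex.log 2
        + ((μ : ℂ) / (8 * T μ)) *
            (Complex.log (z + T μ) - Complex.log (z - T μ) - 2 * artanh (2 * T μ / μ))) :
    Tendsto F (nhdsWithin 2 {μ : ℝ | μ ≠ 2})
      (nhds ((Real.pi : ℂ) * Complex.I / 4 + (1 / 2) * Complex.log (1 - z)
        + Complex.log 2 + 1 / (2 * z) - 1 / 2)) := by
  have hz0 : z ≠ 0 := by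
    intro h; rw [h] at hz; simp at hz
  -- slope lemma for log(z+w) - log(z-w)
  have hzslit : z ∈ Complex.slitPlane := Or.inr hz.ne'
  have hg : Tendsto (fun w : ℂ => (Complex.log (z + w) - Complex.log (z - w)) / w)
      (nhdsWithin 0 {w : ℂ | w ≠ 0}) (nhds (2 / z)) := by
    have h1 : HasDerivAt (fun w : ℂ => Complex.log (z + w)) (z⁻¹) 0 := by
      simpa using (Complex.hasDerivAt_log (by simpa using hzslit)).comp_const_add z 0
    have h2 : HasDerivAt (fun w : ℂ => Complex.log (z - w)) (-(z⁻¹)) 0 := by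
      simpa using (Complex.hasDerivAt_log (by simpa using hzslit)).comp_const_sub z 0
    have hd : HasDerivAt (fun w : ℂ => Complex.log (z + w) - Complex.log (z - w)) (2 / z) 0 := by
      have := h1.sub h2
      refine this.congr_deriv ?_
      ring
    have := hasDerivAt_iff_tendsto_slope.mp hd
    refine this.congr fun w => ?_
    simp [slope_def_field, div_eq_iff, sub_eq_iff_eq_add]
  -- slope lemma for artanh
  have ha : Tendsto (fun v : ℂ => ((1 / 2 : ℂ) * Complex.log ((1 + v) / (1 - v))) / v)
      (nhdsWithin 0 {v : ℂ | v ≠ 0}) (nhds 1) := by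
    have hq : HasDerivAt (fun v : ℂ => (1 + v) / (1 - v)) 2 0 := by
      have hn : HasDerivAt (fun v : ℂ => (1 + v)) 1 0 := by
        simpa using (hasDerivAt_id (0:ℂ)).const_add 1
      have hdd : HasDerivAt (fun v : ℂ => (1 - v)) (-1) 0 := by
        simpa using (hasDerivAt_id (0:ℂ)).const_sub 1
      have := hn.div hdd (by norm_num)
      exact this.congr_deriv (by norm_num)
    have hlog : HasDerivAt Complex.log 1 ((fun v : ℂ => (1 + v) / (1 - v)) 0) := by
      have : HasDerivAt Complex.log ((1:ℂ))⁻¹ 1 := Complex.hasDerivAt_log (by norm_num)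
      simpa using this
    have hd : HasDerivAt (fun v : ℂ => (1 / 2 : ℂ) * Complex.log ((1 + v) / (1 - v))) 1 0 := by
      have := (hlog.comp 0 hq).const_mul (1 / 2 : ℂ)
      simp only [Function.comp_def] at this
      exact this.congr_deriv (by norm_num)
    have := hasDerivAt_iff_tendsto_slope.mp hd
    refine this.congr fun v => ?_
    simp [slope_def_field, div_eq_iff]
  -- T tends to 0 within ≠ 0
  have hTcont : Tendsto T (nhdsWithin 2 {μ : ℝ | μ ≠ 2}) (nhds 0) := by
    have hc : ContinuousAt (fun x : ℂ × ℂ => x.1 ^ x.2) (0, (1/2 : ℂ)) :=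
      Complex.continuousAt_cpow_zero_of_re_pos (by norm_num)
    have hbase : Tendsto (fun μ : ℝ => (((μ ^ 2 / 4 - 1 : ℝ) : ℂ), (1/2 : ℂ)))
        (nhdsWithin 2 {μ : ℝ | μ ≠ 2}) (nhds (0, (1/2:ℂ))) := by
      apply tendsto_nhdsWithin_of_tendsto_nhds
      refine Tendsto.prodMk_nhds ?_ tendsto_const_nhds
      have : ContinuousAt (fun μ : ℝ => (((μ ^ 2 / 4 - 1 : ℝ) : ℂ))) 2 := by
        fun_prop
      have h2 := this.tendsto
      convert h2 using 2
      push_cast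
      norm_num
    have := hc.tendsto.comp hbase
    simp only [Function.comp] at this
    have h0 : ((0:ℂ) ^ (1/2 : ℂ)) = 0 := Complex.zero_cpow (by norm_num)
    rw [h0] at this
    refine this.congr fun μ => ?_
    simp only [Function.comp_apply]
    rw [hT μ]
  have hTne : ∀ᶠ μ : ℝ in nhdsWithin 2 {μ : ℝ | μ ≠ 2}, T μ ≠ 0 ∧ (1:ℝ) < μ := by
    filter_upwards [self_mem_nhdsWithin,
      eventually_nhdsWithin_of_eventually_nhds (eventually_gt_nhds (by norm_num : (1:ℝ) < 2))]
      with μ hμ hμ1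
    refine ⟨?_, hμ1⟩
    rw [hT μ]
    rw [ne_eq, Complex.cpow_eq_zero_iff, not_and_or]
    left
    rw [Complex.ofReal_eq_zero]
    intro h
    have : μ = 2 ∨ μ = -2 := by
      have : μ ^ 2 = 4 := by linarith [h]
      have h4 : μ ^ 2 - 2 ^ 2 = 0 := by norm_num [this]
      rcases mul_eq_zero.mp (by ring_nf; linarith [h4] : (μ - 2) * (μ + 2) = 0) with h' | h'
      · left; linarith
      · right; linarith
    rcases this with h' | h' <;> [exact hμ h'; linarith]
  have hTin : Tendsto T (nhdsWithin 2 {μ : ℝ | μ ≠ 2}) (nhdsWithin 0 {w : ℂ | w ≠ 0}) := by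
    rw [tendsto_nhdsWithin_iff]
    exact ⟨hTcont, hTne.mono fun μ h => h.1⟩
  have hμten : Tendsto (fun μ : ℝ => (μ : ℂ)) (nhdsWithin 2 {μ : ℝ | μ ≠ 2}) (nhds 2) :=
    tendsto_nhdsWithin_of_tendsto_nhds (Complex.continuous_ofReal.continuousAt.tendsto)
  -- argument of artanh tends to 0 within ≠0
  have hvin : Tendsto (fun μ : ℝ => 2 * T μ / (μ : ℂ)) (nhdsWithin 2 {μ : ℝ | μ ≠ 2})
      (nhdsWithin 0 {v : ℂ | v ≠ 0}) := by
    rw [tendsto_nhdsWithin_iff]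
    constructor
    · have : Tendsto (fun μ : ℝ => 2 * T μ / (μ : ℂ)) (nhdsWithin 2 {μ : ℝ | μ ≠ 2})
          (nhds (2 * 0 / 2)) := ((tendsto_const_nhds.mul hTcont).div hμten (by norm_num))
      simpa using this
    · filter_upwards [hTne] with μ ⟨h1, h2⟩
      have hμ0 : (μ : ℂ) ≠ 0 := by
        simpa using fun h => by simp [h] at h2; linarith
      simp only [Set.mem_setOf_eq, div_ne_zero_iff, mul_ne_zero_iff]
      exact ⟨⟨by norm_num, h1⟩, hμ0⟩
  -- limit of log(μ/2 - z) term
  have hlog1 : Tendsto (fun μ : ℝ => (1/2 : ℂ) * Complex.log ((μ / 2 : ℝ) - z))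
      (nhdsWithin 2 {μ : ℝ | μ ≠ 2}) (nhds ((1/2 : ℂ) * Complex.log (1 - z))) := by
    apply tendsto_nhdsWithin_of_tendsto_nhds
    refine Tendsto.const_mul _ ?_
    have hc2 : ContinuousAt (fun μ : ℝ => ((μ / 2 : ℝ) : ℂ) - z) 2 := by fun_prop
    have hcl : ContinuousAt Complex.log ((fun μ : ℝ => ((μ / 2 : ℝ) : ℂ) - z) 2) := by
      apply continuousAt_clog
      right
      simp only [Complex.sub_im, Complex.ofReal_im, zero_sub, ne_eq, neg_eq_zero]
      exact hz.ne'
    have := hcl.tendsto.comp hc2.tendsto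
    convert this using 2
    push_cast
    all_goals norm_num
  -- assemble the limit of the nice formula
  have hmain : Tendsto (fun μ : ℝ =>
      (Real.pi : ℂ) * Complex.I / 4 + (1 / 2) * Complex.log ((μ / 2 : ℝ) - z)
        + Complex.log 2
        + ((μ : ℂ) / 8) * ((Complex.log (z + T μ) - Complex.log (z - T μ)) / T μ)
        - (1/2 : ℂ) * (((1 / 2 : ℂ) * Complex.log ((1 + 2 * T μ / μ) / (1 - 2 * T μ / μ)))
            / (2 * T μ / μ)))
      (nhdsWithin 2 {μ : ℝ | μ ≠ 2})
      (nhds ((Real.pi : ℂ) * Complex.I / 4 + (1 / 2) * Complex.log (1 - z)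
        + Complex.log 2 + 1 / (2 * z) - 1 / 2)) := by
    have t1 : Tendsto (fun μ : ℝ => ((μ : ℂ) / 8) *
        ((Complex.log (z + T μ) - Complex.log (z - T μ)) / T μ))
        (nhdsWithin 2 {μ : ℝ | μ ≠ 2}) (nhds (1 / (2 * z))) := by
      have := (hμten.div_const 8).mul (hg.comp hTin)
      simp only [Function.comp_def] at this
      convert this using 2
      all_goals field_simp
      all_goals ring
    have t2 : Tendsto (fun μ : ℝ => (1/2 : ℂ) *
        (((1 / 2 : ℂ) * Complex.log ((1 + 2 * T μ / μ) / (1 - 2 * T μ / μ))) / (2 * T μ / μ)))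
        (nhdsWithin 2 {μ : ℝ | μ ≠ 2}) (nhds ((1/2 : ℂ) * 1)) :=
      tendsto_const_nhds.mul (ha.comp hvin)
    have c0 : Tendsto (fun _ : ℝ => (Real.pi : ℂ) * Complex.I / 4) (nhdsWithin 2 {μ : ℝ | μ ≠ 2})
        (nhds ((Real.pi : ℂ) * Complex.I / 4)) := tendsto_const_nhds
    have cL : Tendsto (fun _ : ℝ => Complex.log 2) (nhdsWithin 2 {μ : ℝ | μ ≠ 2})
        (nhds (Complex.log 2)) := tendsto_const_nhds
    have := (((c0.add hlog1).add cL).add t1).sub t2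
    convert this using 2
    norm_num
  -- F agrees with the nice formula eventually
  refine hmain.congr' ?_
  filter_upwards [hTne, self_mem_nhdsWithin] with μ ⟨hTμ, hμ1⟩ hμ2
  rw [hF μ, hartanh]
  have hμ0 : (μ : ℂ) ≠ 0 := by
    simpa using fun h => by simp [h] at hμ1; linarith
  have hv : 2 * T μ / (μ : ℂ) ≠ 0 := by
    simp only [div_ne_zero_iff, mul_ne_zero_iff]
    exact ⟨⟨by norm_num, hTμ⟩, hμ0⟩
  set L1 := Complex.log (z + T μ)
  set L2 := Complex.log (z - T μ)
  set a := Complex.log ((1 + 2 * T μ / (μ:ℂ)) / (1 - 2 * T μ / (μ:ℂ)))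
  have e1 : (μ:ℂ) / 8 * ((L1 - L2) / T μ) = (μ:ℂ) / (8 * T μ) * (L1 - L2) := by
    field_simp
  have e2 : (1/2 : ℂ) * (((1/2 : ℂ) * a) / (2 * T μ / (μ:ℂ))) = (μ:ℂ) / (8 * T μ) * (2 * ((1/2 : ℂ) * a)) := by
    field_simp
    ring
  rw [e1, e2]
  ring
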